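/- Let T be a theory over a one-sorted first-order signature. If T is stably infinite and has a strong pre-witness, then T is finitely smooth. -/

import Mathlib

open FirstOrder FirstOrder.Language

universe u v

/-- `M` (with structure `inst`) is a model of the theory `T`. -/
def ModelsT (L : FirstOrder.Language.{u, v}) (T : L.Theory) (M : Type) (inst : L.Structure M) : Prop :=
  letI := inst
  T.Model M

/-- Realization of a formula, with the structure instance given explicitly. -/
def RealizeIn (L : FirstOrder.Language.{u, v}) (M : Type) (inst : L.Structure M) {α : Type}
    (φ : L.Formula α) (v : α → M) : Prop :=
  letI := inst
  φ.Realize v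

/-- A valuation `v` satisfies the arrangement `δ_V^E` determined on the finite variable
set `V` by the equivalence relation `E`. -/
def RealizesArr {M : Type} (E : Setoid ℕ) (V : Finset ℕ) (v : ℕ → M) : Prop :=
  ∀ x ∈ V, ∀ y ∈ V, (E.r x y ↔ v x = v y)

/-- `T` is stably finite: every quantifier-free formula satisfied in a model of `T` is
satisfied in a finite model of `T` of no greater cardinality. -/
def StablyFiniteT (L : FirstOrder.Language.{u, v}) (T : L.Theory) : Prop :=
  ∀ φ : L.Formula ℕ, φ.IsQF →
    ∀ (M : Type) (inst : L.Structure M), ModelsT L T M inst →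
      ∀ v : ℕ → M, RealizeIn L M inst φ v →
        ∃ (N : Type) (instN : L.Structure N), ModelsT L T N instN ∧ Finite N ∧
          Cardinal.mk N ≤ Cardinal.mk M ∧ ∃ w : ℕ → N, RealizeIn L N instN φ w

/-- `T` is finitely smooth: for every quantifier-free formula `φ`, model of `T` with a
valuation satisfying `φ`, and finite cardinal `κ` at least the size of the model, there
is a model of `T` of size exactly `κ` with a valuation satisfying `φ`. -/
def FinitelySmoothT (L : FirstOrder.Language.{u, v}) (T : L.Theory) : Prop :=
  ∀ φ : L.Formula ℕ, φ.IsQF →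
    ∀ (M : Type) (inst : L.Structure M), ModelsT L T M inst →
      ∀ v : ℕ → M, RealizeIn L M inst φ v →
        ∀ κ : ℕ, Cardinal.mk M ≤ (κ : Cardinal) →
          ∃ (N : Type) (instN : L.Structure N), ModelsT L T N instN ∧
            Cardinal.mk N = (κ : Cardinal) ∧ ∃ w : ℕ → N, RealizeIn L N instN φ w

/-- `T` is smooth: for every quantifier-free formula `φ`, model of `T` with a valuation
satisfying `φ`, and cardinal `κ` at least the size of the model, there is a model of `T`
of size exactly `κ` with a valuation satisfying `φ`. -/
def SmoothT (L : FirstOrder.Language.{u, v}) (T : L.Theory) : Prop :=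
  ∀ φ : L.Formula ℕ, φ.IsQF →
    ∀ (M : Type) (inst : L.Structure M), ModelsT L T M inst →
      ∀ v : ℕ → M, RealizeIn L M inst φ v →
        ∀ κ : Cardinal, Cardinal.mk M ≤ κ →
          ∃ (N : Type) (instN : L.Structure N), ModelsT L T N instN ∧
            Cardinal.mk N = κ ∧ ∃ w : ℕ → N, RealizeIn L N instN φ w

/-- `T` is stably infinite: every quantifier-free formula satisfiable in some model of `T`
is satisfiable in some model of `T` with infinite domain. -/
def StablyInfiniteT (L : FirstOrder.Language.{u, v}) (T : L.Theory) : Prop :=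
  ∀ φ : L.Formula ℕ, φ.IsQF →
    (∃ (M : Type) (inst : L.Structure M), ModelsT L T M inst ∧
      ∃ v : ℕ → M, RealizeIn L M inst φ v) →
    ∃ (M : Type) (inst : L.Structure M), ModelsT L T M inst ∧ Infinite M ∧
      ∃ v : ℕ → M, RealizeIn L M inst φ v

/-- `wit` is a pre-witness for `T`: it maps quantifier-free formulas to quantifier-free
formulas; `φ` and `∃x⃗. wit(φ)` (where `x⃗ = vars(wit(φ)) \ vars(φ)`) hold in exactly the
same models-with-valuations of `T`; and if `wit(φ)` is satisfiable in a model of `T`,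
then `φ` is satisfied in some model of `T` under a valuation in which every element of
the domain is the value of some variable of `wit(φ)`. -/
def IsPreWitness (L : FirstOrder.Language.{u, v}) (T : L.Theory) (wit : L.Formula ℕ → L.Formula ℕ) :
    Prop :=
  (∀ φ : L.Formula ℕ, φ.IsQF → (wit φ).IsQF) ∧
  (∀ φ : L.Formula ℕ, φ.IsQF →
    ∀ (M : Type) (inst : L.Structure M), ModelsT L T M inst → ∀ v : ℕ → M,
      (RealizeIn L M inst φ v ↔
        ∃ w : ℕ → M, (∀ x : ℕ, x ∉ (wit φ).freeVarFinset \ φ.freeVarFinset → w x = v x) ∧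
          RealizeIn L M inst (wit φ) w)) ∧
  (∀ φ : L.Formula ℕ, φ.IsQF →
    (∃ (M : Type) (inst : L.Structure M), ModelsT L T M inst ∧
      ∃ v : ℕ → M, RealizeIn L M inst (wit φ) v) →
    ∃ (M : Type) (inst : L.Structure M), ModelsT L T M inst ∧
      ∃ v : ℕ → M, RealizeIn L M inst φ v ∧
        ∀ a : M, ∃ x ∈ (wit φ).freeVarFinset, v x = a)

/-- `wit` is a strong pre-witness for `T`: a pre-witness such that in addition, for every
quantifier-free `φ`, finite variable set `V`, and arrangement `δ_V` of `V`, if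
`wit(φ) ∧ δ_V` is satisfiable in a model of `T`, then it is satisfied in some model of `T`
under a valuation in which every element of the domain is the value of some variable of
`wit(φ) ∧ δ_V`. -/
def IsStrongPreWitness (L : FirstOrder.Language.{u, v}) (T : L.Theory)
    (wit : L.Formula ℕ → L.Formula ℕ) : Prop :=
  IsPreWitness L T wit ∧
  ∀ φ : L.Formula ℕ, φ.IsQF → ∀ (V : Finset ℕ) (E : Setoid ℕ),
    (∃ (M : Type) (inst : L.Structure M), ModelsT L T M inst ∧
      ∃ v : ℕ → M, RealizeIn L M inst (wit φ) v ∧ RealizesArr E V v) →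
    ∃ (M : Type) (inst : L.Structure M), ModelsT L T M inst ∧
      ∃ v : ℕ → M, RealizeIn L M inst (wit φ) v ∧ RealizesArr E V v ∧
        ∀ a : M, ∃ x ∈ (wit φ).freeVarFinset ∪ V, v x = a

section MyHelpers

variable {L : FirstOrder.Language.{u, v}}

theorem my_realize_congr_vars {M : Type} [L.Structure M] (φ : L.Formula ℕ) {v v' : ℕ → M}
    (h : ∀ x ∈ φ.freeVarFinset, v x = v' x) : φ.Realize v ↔ φ.Realize v' := by
  have hs : ↑(BoundedFormula.freeVarFinset φ) ⊆ (↑(BoundedFormula.freeVarFinset φ) : Set ℕ) :=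
    subset_rfl
  have key : (v ∘ (fun x : (↑(BoundedFormula.freeVarFinset φ) : Set ℕ) => (x : ℕ)))
      = (v' ∘ (fun x : (↑(BoundedFormula.freeVarFinset φ) : Set ℕ) => (x : ℕ))) :=
    funext fun x => h x x.2
  show BoundedFormula.Realize φ v default ↔ BoundedFormula.Realize φ v' default
  rw [← BoundedFormula.realize_restrictFreeVar' hs (v := v),
    ← BoundedFormula.realize_restrictFreeVar' hs (v := v'), key]

/-- conjunction of a list of formulas -/
noncomputable def myConj (l : List (L.Formula ℕ)) : L.Formula ℕ := l.foldr (· ⊓ ·) ⊤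

theorem myConj_isQF (l : List (L.Formula ℕ)) (h : ∀ ψ ∈ l, ψ.IsQF) : (myConj l).IsQF := by
  induction l with
  | nil => exact BoundedFormula.IsQF.top
  | cons a l ih =>
    exact (h a (List.mem_cons_self (a := a) (l := l))).inf (ih fun ψ hψ => h ψ (List.mem_cons_of_mem _ hψ))

theorem realize_myConj {M : Type} [L.Structure M] (l : List (L.Formula ℕ)) (v : ℕ → M) :
    (myConj l).Realize v ↔ ∀ ψ ∈ l, ψ.Realize v := by
  induction l with
  | nil => simp [myConj]
  | cons a l ih => simp [myConj, Formula.realize_inf, ih, myConj] at ih ⊢ ; tauto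

/-- The arrangement formula encoding the equality pattern of `w` on `S`. -/
noncomputable def patFml (L : FirstOrder.Language.{u, v}) (S : Finset ℕ) {A : Type} (w : ℕ → A) :
    L.Formula ℕ :=
  letI := Classical.decEq A
  myConj ((S ×ˢ S).toList.map (fun p =>
    if w p.1 = w p.2 then Term.equal (Term.var p.1) (Term.var p.2)
    else (Term.equal (Term.var p.1) (Term.var p.2)).not))

theorem patFml_isQF (S : Finset ℕ) {A : Type} (w : ℕ → A) : (patFml L S w).IsQF := by
  refine myConj_isQF _ ?_
  intro ψ hψ
  simp only [List.mem_map] at hψ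
  obtain ⟨p, _, rfl⟩ := hψ
  split
  · exact (BoundedFormula.IsAtomic.equal _ _).isQF
  · exact (BoundedFormula.IsAtomic.equal _ _).isQF.not

theorem realize_patFml {A M : Type} [L.Structure M] (S : Finset ℕ) (w : ℕ → A) (v : ℕ → M) :
    (patFml L S w).Realize v ↔ ∀ x ∈ S, ∀ y ∈ S, (w x = w y ↔ v x = v y) := by
  rw [patFml, realize_myConj]
  simp only [List.mem_map, Finset.mem_toList, Finset.mem_product]
  constructor
  · intro H x hx y hy
    have h1 := H _ ⟨(x, y), ⟨hx, hy⟩, rfl⟩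
    by_cases hw : w x = w y
    · rw [if_pos hw] at h1
      rw [Formula.realize_equal] at h1
      simp only [Term.realize_var] at h1
      exact ⟨fun _ => h1, fun _ => hw⟩
    · rw [if_neg hw] at h1
      rw [Formula.realize_not, Formula.realize_equal] at h1
      simp only [Term.realize_var] at h1
      exact ⟨fun h' => absurd h' hw, fun h' => absurd h' h1⟩
  · rintro H ψ ⟨⟨x, y⟩, ⟨hx, hy⟩, rfl⟩
    by_cases hw : w x = w y
    · rw [if_pos hw, Formula.realize_equal]
      simp only [Term.realize_var]
      exact (H x hx y hy).mp hw
    · rw [if_neg hw, Formula.realize_not, Formula.realize_equal]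
      simp only [Term.realize_var]
      exact fun h' => hw ((H x hx y hy).mpr h')

theorem card_image_pattern {A B : Type} [DecidableEq A] [DecidableEq B] (S : Finset ℕ) (u : ℕ → A) (w : ℕ → B)
    (h : ∀ x ∈ S, ∀ y ∈ S, (u x = u y ↔ w x = w y)) :
    (S.image u).card = (S.image w).card := by
  classical
  refine Finset.card_bij (fun a ha => w (Finset.mem_image.mp ha).choose) ?_ ?_ ?_
  · intro a ha
    exact Finset.mem_image.mpr ⟨_, (Finset.mem_image.mp ha).choose_spec.1, rfl⟩
  · intro a₁ ha₁ a₂ ha₂ heq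
    have s₁ := (Finset.mem_image.mp ha₁).choose_spec
    have s₂ := (Finset.mem_image.mp ha₂).choose_spec
    rw [← s₁.2, ← s₂.2]
    exact (h _ s₁.1 _ s₂.1).mpr heq
  · rintro b hb
    obtain ⟨y, hy, rfl⟩ := Finset.mem_image.mp hb
    refine ⟨u y, Finset.mem_image.mpr ⟨y, hy, rfl⟩, ?_⟩
    have s := (Finset.mem_image.mp (Finset.mem_image.mpr ⟨y, hy, rfl⟩ : u y ∈ S.image u)).choose_spec
    exact (h _ s.1 _ hy).mp s.2

end MyHelpers


/-- If a theory is stably infinite and has a strong pre-witness, then it is finitely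
smooth. -/
theorem stmt_13 (L : FirstOrder.Language.{u, v}) (T : L.Theory)
    (hsi : StablyInfiniteT L T)
    (h : ∃ wit : L.Formula ℕ → L.Formula ℕ, IsStrongPreWitness L T wit) :
    FinitelySmoothT L T := by
  classical
  obtain ⟨wit, ⟨⟨hQF, hiff, _⟩, hstrong⟩⟩ := h
  intro φ hφ M inst hM v hv κ hκ
  haveI : Finite M := by
    rw [← Cardinal.lt_aleph0_iff_finite]
    exact lt_of_le_of_lt hκ (Cardinal.nat_lt_aleph0 κ)
  haveI : Fintype M := Fintype.ofFinite M
  have hcardM : Fintype.card M ≤ κ := by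
    rwa [Cardinal.mk_fintype, Nat.cast_le] at hκ
  -- get a valuation realizing `wit φ` in `M`
  obtain ⟨w, -, hw2⟩ := (hiff φ hφ M inst hM v).mp hv
  set S := (wit φ).freeVarFinset with hS
  set m := (S.image w).card with hm
  have hmκ : m ≤ κ :=
    le_trans (le_trans (Finset.card_le_univ _) (le_of_eq Finset.card_univ)) hcardM
  -- apply stable infiniteness to `wit φ ⊓ patFml`
  have hQFδ : ((wit φ) ⊓ patFml L S w).IsQF := (hQF φ hφ).inf (patFml_isQF S w)
  have hsat : ∃ (M₀ : Type) (inst₀ : L.Structure M₀), ModelsT L T M₀ inst₀ ∧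
      ∃ u : ℕ → M₀, RealizeIn L M₀ inst₀ ((wit φ) ⊓ patFml L S w) u := by
    refine ⟨M, inst, hM, w, ?_⟩
    show @Formula.Realize L M inst ℕ _ w
    letI := inst
    rw [Formula.realize_inf]
    exact ⟨hw2, (realize_patFml S w w).mpr (fun x _ y _ => Iff.rfl)⟩
  obtain ⟨M', inst', hM', hInf, u, hu⟩ := hsi _ hQFδ hsat
  letI := inst'
  have hu' : ((wit φ) ⊓ patFml L S w).Realize u := hu
  rw [Formula.realize_inf] at hu'
  obtain ⟨huw, hup⟩ := hu'
  have hupat : ∀ x ∈ S, ∀ y ∈ S, (w x = w y ↔ u x = u y) := (realize_patFml S w u).mp hup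
  -- fresh variables
  set n := S.sup id + 1 with hn
  set F := (Finset.range (κ - m)).image (fun i => n + i) with hF
  have hFS : ∀ x ∈ F, x ∉ S := by
    intro x hx hxS
    obtain ⟨i, -, rfl⟩ := Finset.mem_image.mp hx
    have : id (n + i) ≤ S.sup id := Finset.le_sup hxS
    simp only [id] at this
    omega
  set V := S ∪ F with hV
  -- fresh elements in the infinite model
  have hcompl : ((↑(S.image u) : Set M'))ᶜ.Infinite := (Finset.finite_toSet _).infinite_compl
  let f : ℕ ↪ ↥((↑(S.image u) : Set M'))ᶜ := hcompl.natEmbedding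
  set u' : ℕ → M' := fun x => if x ∈ S then u x else (f x : M') with hu'def
  have hu'S : ∀ x ∈ S, u x = u' x := fun x hx => (if_pos hx).symm
  have hu'w : (wit φ).Realize u' := (my_realize_congr_vars _ hu'S).mp huw
  have harr : RealizesArr (Setoid.ker u') V u' := fun x _ y _ => Iff.rfl
  -- apply the strong pre-witness
  obtain ⟨N, instN, hN, t, ht, htarr, htsurj⟩ := hstrong φ hφ V (Setoid.ker u')
    ⟨M', inst', hM', u', hu'w, harr⟩
  letI := instN
  -- `φ` is realized in `N` by `t`
  have hφt : RealizeIn L N instN φ t := (hiff φ hφ N instN hN t).mpr ⟨t, fun _ _ => rfl, ht⟩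
  -- cardinality computation
  have hSV : S ⊆ V := Finset.subset_union_left
  have hsurjV : ∀ a : N, ∃ x ∈ V, t x = a := by
    intro a
    obtain ⟨x, hx, hxa⟩ := htsurj a
    rw [← hS, Finset.union_eq_right.mpr hSV] at hx
    exact ⟨x, hx, hxa⟩
  have hSimg : S.image u' = S.image u := Finset.image_congr (fun x hx => (hu'S x hx).symm)
  have himF : F.image u' = F.image (fun x => (f x : M')) :=
    Finset.image_congr (fun x hx => if_neg (hFS x hx))
  have hcardF : (F.image u').card = κ - m := by
    have hinj : Function.Injective (fun x => ((f x : M'))) :=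
      fun a b hab => f.injective (Subtype.val_injective hab)
    rw [himF, Finset.card_image_of_injective _ hinj, hF,
      Finset.card_image_of_injective _ (add_right_injective n), Finset.card_range]
  have hdisj : Disjoint (S.image u') (F.image u') := by
    rw [Finset.disjoint_left]
    intro a haS haF
    rw [himF] at haF
    obtain ⟨x, -, rfl⟩ := Finset.mem_image.mp haF
    rw [hSimg] at haS
    exact (f x).2 haS
  have hVcard : (V.image u').card = κ := by
    rw [hV, Finset.image_union, Finset.card_union_of_disjoint hdisj, hcardF, hSimg,
      card_image_pattern S u w (fun x hx y hy => (hupat x hx y hy).symm), ← hm]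
    omega
  have harrt : ∀ x ∈ V, ∀ y ∈ V, (t x = t y ↔ u' x = u' y) :=
    fun x hx y hy => (htarr x hx y hy).symm
  have hVt : (V.image t).card = κ := by
    rw [card_image_pattern V t u' harrt]
    exact hVcard
  have huniv : ∀ a : N, a ∈ V.image t := by
    intro a
    obtain ⟨x, hx, hxa⟩ := hsurjV a
    exact Finset.mem_image.mpr ⟨x, hx, hxa⟩
  haveI fintN : Fintype N := ⟨V.image t, huniv⟩
  have hunivN : (V.image t) = (Finset.univ : Finset N) := Finset.eq_univ_iff_forall.mpr huniv
  have hcardN : Fintype.card N = κ := by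
    rw [← Finset.card_univ, ← hunivN, hVt]
  refine ⟨N, instN, hN, ?_, t, hφt⟩
  rw [Cardinal.mk_fintype, hcardN]
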